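/- Let K be a field of characteristic zero and let C ∈ K[x₁,…,x_{n+1}] be a non-constant homogeneous polynomial that is closed, i.e. C cannot be written as α·c^k with α ∈ K, c ∈ K[x₁,…,x_{n+1}] non-constant, and k ≥ 2. Then for every λ ∈ K with λ ≠ 0, the polynomial C − λ is irreducible in K[x₁,…,x_{n+1}]. -/

import Mathlib

open MvPolynomial Polynomial

/-- A polynomial is *closed* if it cannot be written as `α • c ^ k` with
`c` non-constant and `k ≥ 2`. -/
def IsClosedPoly {K : Type*} [CommRing K] {σ : Type*} (P : MvPolynomial σ K) : Prop :=
  ¬ ∃ (α : K) (c : MvPolynomial σ K) (k : ℕ), 2 ≤ k ∧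
      c ∉ Set.range (MvPolynomial.C : K → MvPolynomial σ K) ∧
      P = MvPolynomial.C α * c ^ k

noncomputable section AuxPhi

variable {K : Type*} [Field K] {σ : Type*}

/-- The substitution `x_i ↦ x_i • t`; homogeneous components become coefficients. -/
def phiAux : MvPolynomial σ K →ₐ[K] Polynomial (MvPolynomial σ K) :=
  MvPolynomial.aeval (fun i => Polynomial.C (MvPolynomial.X i) * Polynomial.X)

lemma phiAux_eval_one (P : MvPolynomial σ K) : Polynomial.eval 1 (phiAux P) = P := by
  induction P using MvPolynomial.induction_on with
  | C a => simp [phiAux, Polynomial.algebraMap_apply]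
  | add p q hp hq => simp only [map_add, Polynomial.eval_add, hp, hq]
  | mul_X p i h => simp only [phiAux, map_mul, MvPolynomial.aeval_X, Polynomial.eval_mul,
      Polynomial.eval_C, Polynomial.eval_X, mul_one]
                   rw [← phiAux]; rw [h]

lemma phiAux_eval_zero (P : MvPolynomial σ K) :
    Polynomial.eval 0 (phiAux P) = MvPolynomial.C (constantCoeff P) := by
  induction P using MvPolynomial.induction_on with
  | C a => simp [phiAux, Polynomial.algebraMap_apply]
  | add p q hp hq => simp only [map_add, Polynomial.eval_add, hp, hq, map_add]
  | mul_X p i h => simp [phiAux, h]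

lemma phiAux_monomial (s : σ →₀ ℕ) (a : K) :
    phiAux (monomial s a) = Polynomial.C (monomial s a) * Polynomial.X ^ s.degree := by
  classical
  simp only [phiAux, MvPolynomial.aeval_monomial, Polynomial.algebraMap_apply,
    MvPolynomial.algebraMap_eq]
  rw [Finsupp.prod]
  simp_rw [mul_pow, ← Polynomial.C_pow]
  rw [Finset.prod_mul_distrib, ← map_prod, Finset.prod_pow_eq_pow_sum]
  rw [monomial_eq, Finsupp.prod, map_mul, map_prod]
  simp_rw [map_pow]
  rw [Finsupp.degree_apply]
  ring

lemma phiAux_isHomogeneous {P : MvPolynomial σ K} {d : ℕ} (h : P.IsHomogeneous d) :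
    phiAux P = Polynomial.C P * Polynomial.X ^ d := by
  conv_lhs => rw [P.as_sum]
  conv_rhs => rw [P.as_sum]
  rw [map_sum, map_sum, Finset.sum_mul]
  refine Finset.sum_congr rfl fun s hs => ?_
  rw [phiAux_monomial]
  congr 2
  have := h (mem_support_iff.mp hs)
  rw [Finsupp.degree_eq_weight_one]
  exact this

lemma eq_C_of_phiAux_natDegree_eq_zero {F : MvPolynomial σ K}
    (h0 : (phiAux F).natDegree = 0) : F = MvPolynomial.C (constantCoeff F) := by
  have hC : phiAux F = Polynomial.C ((phiAux F).coeff 0) :=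
    Polynomial.eq_C_coeff_zero_iff_natDegree_eq_zero.mpr h0
  have h1 := phiAux_eval_one F
  have h2 := phiAux_eval_zero F
  rw [hC] at h1 h2
  simp only [Polynomial.eval_C] at h1 h2
  rw [← h1, h2]; simp

/-- Units of a multivariate polynomial ring over a field are nonzero constants. -/
lemma eq_C_of_isUnit {F : MvPolynomial σ K} (h : IsUnit F) :
    F = MvPolynomial.C (constantCoeff F) :=
  eq_C_of_phiAux_natDegree_eq_zero
    (Polynomial.natDegree_eq_zero_of_isUnit (h.map phiAux))

lemma isUnit_mv_iff {F : MvPolynomial σ K} :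
    IsUnit F ↔ F ≠ 0 ∧ ∃ β : K, F = MvPolynomial.C β := by
  constructor
  · intro h
    exact ⟨h.ne_zero, constantCoeff F, eq_C_of_isUnit h⟩
  · rintro ⟨h0, β, rfl⟩
    have : IsUnit β := isUnit_iff_ne_zero.mpr (by simpa using h0)
    exact this.map (MvPolynomial.C : K →+* MvPolynomial σ K)

end AuxPhi

set_option maxHeartbeats 1000000 in
theorem stmt7 {K : Type*} [Field K] [CharZero K] (n : ℕ) (hn : 1 ≤ n)
    (Cp : MvPolynomial (Fin (n + 1)) K) (d : ℕ) (hd : 1 ≤ d)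
    (hhom : Cp.IsHomogeneous d) (hclosed : IsClosedPoly Cp)
    (lam : K) (hlam : lam ≠ 0) :
    Irreducible (Cp - MvPolynomial.C lam) := by
  classical
  have hCpne : Cp ≠ 0 := by
    rintro rfl
    refine hclosed ⟨0, MvPolynomial.X 0, 2, le_rfl, ?_, by simp⟩
    rintro ⟨a, ha⟩
    have := congrArg totalDegree ha.symm
    simp [totalDegree_C, totalDegree_X] at this
  have hdeg : Cp.totalDegree = d := hhom.totalDegree hCpne
  have hCpnotC : ∀ γ : K, Cp ≠ MvPolynomial.C γ := by
    intro γ h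
    rw [h, totalDegree_C] at hdeg
    omega
  have hsubne : Cp - MvPolynomial.C lam ≠ 0 := by
    intro h
    exact hCpnotC lam (sub_eq_zero.mp h)
  constructor
  · intro hu
    obtain ⟨-, β, hβ⟩ := isUnit_mv_iff.mp hu
    refine hCpnotC (β + lam) ?_
    rw [map_add]
    linear_combination hβ
  · rintro F G hFG
    by_contra hcon
    push_neg at hcon
    obtain ⟨hF, hG⟩ := hcon
    have hFne : F ≠ 0 := fun h => hsubne (by rw [hFG, h, zero_mul])
    have hGne : G ≠ 0 := fun h => hsubne (by rw [hFG, h, mul_zero])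
    set pF := phiAux F with hpF
    set pG := phiAux G with hpG
    have hpFne : pF ≠ 0 := fun h => hFne (by
      have := congrArg (Polynomial.eval 1) h
      rwa [hpF, phiAux_eval_one, Polynomial.eval_zero] at this)
    have hpGne : pG ≠ 0 := fun h => hGne (by
      have := congrArg (Polynomial.eval 1) h
      rwa [hpG, phiAux_eval_one, Polynomial.eval_zero] at this)
    have haF : 1 ≤ pF.natDegree := by
      rcases Nat.eq_zero_or_pos pF.natDegree with h0 | h
      · exact absurd (isUnit_mv_iff.mpr ⟨hFne, _, eq_C_of_phiAux_natDegree_eq_zero h0⟩) hF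
      · exact h
    have haG : 1 ≤ pG.natDegree := by
      rcases Nat.eq_zero_or_pos pG.natDegree with h0 | h
      · exact absurd (isUnit_mv_iff.mpr ⟨hGne, _, eq_C_of_phiAux_natDegree_eq_zero h0⟩) hG
      · exact h
    have hprod : pF * pG =
        Polynomial.C Cp * Polynomial.X ^ d - Polynomial.C (MvPolynomial.C lam) := by
      rw [hpF, hpG, ← map_mul, ← hFG, map_sub, phiAux_isHomogeneous hhom]
      congr 1
      rw [phiAux, MvPolynomial.aeval_C, Polynomial.algebraMap_apply, MvPolynomial.algebraMap_eq]
    -- move to the fraction field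
    set L := FractionRing (MvPolynomial (Fin (n + 1)) K)
    have halg : Function.Injective (algebraMap (MvPolynomial (Fin (n + 1)) K) L) := IsFractionRing.injective (MvPolynomial (Fin (n + 1)) K) L
    set f : Polynomial L := pF.map (algebraMap (MvPolynomial (Fin (n + 1)) K) L) with hf
    set g : Polynomial L := pG.map (algebraMap (MvPolynomial (Fin (n + 1)) K) L) with hg
    have hfne : f ≠ 0 := Polynomial.map_ne_zero_iff halg |>.mpr hpFne
    have hgne : g ≠ 0 := Polynomial.map_ne_zero_iff halg |>.mpr hpGne
    have hclne : algebraMap (MvPolynomial (Fin (n + 1)) K) L Cp ≠ 0 := fun h => hCpne (halg (by simpa using h))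
    have hllne : algebraMap (MvPolynomial (Fin (n + 1)) K) L (MvPolynomial.C lam) ≠ 0 := by
      intro h
      apply hlam
      have : (MvPolynomial.C lam : MvPolynomial (Fin (n + 1)) K) = 0 := halg (by simpa using h)
      simpa using this
    have hprodL : f * g =
        Polynomial.C (algebraMap (MvPolynomial (Fin (n + 1)) K) L Cp) * Polynomial.X ^ d
          - Polynomial.C (algebraMap (MvPolynomial (Fin (n + 1)) K) L (MvPolynomial.C lam)) := by
      rw [hf, hg, ← Polynomial.map_mul, hprod]
      simp [Polynomial.map_sub, Polynomial.map_mul, Polynomial.map_pow]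
    have hfdeg : f.natDegree = pF.natDegree := Polynomial.natDegree_map_eq_of_injective halg _
    have hgdeg : g.natDegree = pG.natDegree := Polynomial.natDegree_map_eq_of_injective halg _
    have hsum : f.natDegree + g.natDegree = d := by
      rw [← Polynomial.natDegree_mul hfne hgne, hprodL, Polynomial.natDegree_sub_C,
        Polynomial.natDegree_C_mul_X_pow d _ hclne]
    set a := f.natDegree with ha
    have ha1 : 1 ≤ a := by omega
    have halt : a < d := by
      have := hgdeg ▸ haG
      omega
    have hcoeff0 : f.coeff 0 * g.coeff 0 = -(algebraMap (MvPolynomial (Fin (n + 1)) K) L (MvPolynomial.C lam)) := by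
      rw [← Polynomial.mul_coeff_zero, hprodL]
      have hd0 : d ≠ 0 := by omega
      simp [Polynomial.coeff_X_pow, hd0, Ne.symm hd0]
    have hf0 : f.coeff 0 ≠ 0 := by
      intro h
      rw [h, zero_mul] at hcoeff0
      exact hllne (by simpa using hcoeff0.symm)
    have hlcne : f.leadingCoeff ≠ 0 := Polynomial.leadingCoeff_ne_zero.mpr hfne
    -- algebraic closure: get z with z^(2d) = u^(2a)
    set u : L := algebraMap (MvPolynomial (Fin (n + 1)) K) L (MvPolynomial.C lam) / algebraMap (MvPolynomial (Fin (n + 1)) K) L Cp with hu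
    have hune : u ≠ 0 := div_ne_zero hllne hclne
    set z : L := f.coeff 0 / f.leadingCoeff with hz
    have hzne : z ≠ 0 := div_ne_zero hf0 hlcne
    have hkey : z ^ (2 * d) = u ^ (2 * a) := by
      set M := AlgebraicClosure L
      set ι : L →+* M := algebraMap L M with hι
      have hιinj : Function.Injective ι := ι.injective
      have hsplit : Polynomial.Splits (f.map ι) := IsAlgClosed.splits _
      set fM := f.map ι with hfM
      have hfMne : fM ≠ 0 := Polynomial.map_ne_zero_iff hιinj |>.mpr hfne
      have hcard : fM.roots.card = a := hsplit.natDegree_eq_card_roots.symm.trans (Polynomial.natDegree_map ι)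
      have hclM : ι (algebraMap (MvPolynomial (Fin (n + 1)) K) L Cp) ≠ 0 :=
        fun h => hclne (hιinj (by simpa using h))
      have hroots : ∀ ρ ∈ fM.roots, ρ ^ d = ι u := by
        intro ρ hρ
        have hρ0 : fM.eval ρ = 0 := (Polynomial.mem_roots hfMne).mp hρ
        have hmap := congrArg (fun p : Polynomial L => Polynomial.eval ρ (p.map ι)) hprodL
        simp only [Polynomial.map_mul, Polynomial.map_sub, Polynomial.map_pow,
          Polynomial.map_C, Polynomial.map_X, Polynomial.eval_mul, Polynomial.eval_sub,
          Polynomial.eval_pow, Polynomial.eval_C, Polynomial.eval_X, ← hfM] at hmap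
        rw [hρ0, zero_mul] at hmap
        rw [hu, map_div₀, eq_div_iff hclM]
        linear_combination -hmap
      have hprodpow : fM.roots.prod ^ d = ι u ^ a := by
        rw [← hcard]
        calc fM.roots.prod ^ d = (fM.roots.map (fun x : M => x ^ d)).prod := by
              rw [Multiset.prod_map_pow (f := fun x : M => x), Multiset.map_id']
          _ = (fM.roots.map (fun _ : M => ι u)).prod := by
              exact congrArg Multiset.prod (Multiset.map_congr rfl hroots)
          _ = ι u ^ fM.roots.card := by rw [Multiset.map_const', Multiset.prod_replicate]
      have heq : fM = Polynomial.C (ι f.leadingCoeff) * (fM.roots.map fun a => Polynomial.X - Polynomial.C a).prod := by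
        rw [← Polynomial.leadingCoeff_map]; exact hsplit.eq_prod_roots
      have h0 := congrArg (Polynomial.eval 0) heq
      rw [Polynomial.eval_mul, Polynomial.eval_C, Polynomial.eval_multiset_prod,
        Multiset.map_map] at h0
      simp only [Function.comp, Polynomial.eval_sub, Polynomial.eval_X, Polynomial.eval_C,
        zero_sub] at h0
      have hneg : (fM.roots.map (fun ρ : M => -ρ)).prod
          = (-1) ^ fM.roots.card * fM.roots.prod := by
        simpa using Multiset.prod_map_neg fM.roots
      rw [hneg, hcard] at h0
      have hcoeffmap : ι (f.coeff 0) = Polynomial.eval 0 (f.map ι) := by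
        rw [← Polynomial.coeff_map, Polynomial.coeff_zero_eq_eval_zero]
      have hzι : ι z = (-1) ^ a * fM.roots.prod := by
        have hlcM : ι f.leadingCoeff ≠ 0 := fun h => hlcne (hιinj (by simpa using h))
        rw [hz, map_div₀, hcoeffmap, ← hfM, h0, hfM]
        rw [mul_comm, mul_div_assoc, div_self hlcM, mul_one]
      apply hιinj
      rw [map_pow, map_pow, hzι, mul_pow, ← pow_mul]
      have hsign : (-1 : M) ^ (a * (2 * d)) = 1 := by
        rw [show a * (2 * d) = 2 * (a * d) by ring, pow_mul]
        norm_num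
      rw [hsign, one_mul, show 2 * d = d * 2 by ring, pow_mul, hprodpow, ← pow_mul,
        show a * 2 = 2 * a by ring]
    -- arithmetic
    set g0 := Nat.gcd (2 * a) (2 * d) with hg0
    have hg0pos : 0 < g0 := Nat.gcd_pos_of_pos_right _ (by omega)
    set a' := 2 * a / g0 with ha'
    set d' := 2 * d / g0 with hd'
    have hea : 2 * a = g0 * a' := (Nat.mul_div_cancel' (Nat.gcd_dvd_left _ _)).symm
    have hed : 2 * d = g0 * d' := (Nat.mul_div_cancel' (Nat.gcd_dvd_right _ _)).symm
    have hcop : Nat.Coprime a' d' := Nat.coprime_div_gcd_div_gcd hg0pos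
    have ha'1 : 1 ≤ a' :=
      Nat.div_pos (Nat.le_of_dvd (by omega) (Nat.gcd_dvd_left _ _)) hg0pos
    have hd'1 : 1 ≤ d' :=
      Nat.div_pos (Nat.le_of_dvd (by omega) (Nat.gcd_dvd_right _ _)) hg0pos
    have hd'2 : 2 ≤ d' := by
      rcases Nat.lt_or_ge d' 2 with h | h
      · exfalso
        have hd'eq : d' = 1 := by omega
        rw [hd'eq, mul_one] at hed
        have : 2 * d ∣ 2 * a := hed ▸ Nat.gcd_dvd_left _ _
        have := Nat.le_of_dvd (by omega) this
        omega
      · exact h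
    obtain ⟨m, -, hm⟩ := Nat.exists_mul_mod_eq_one_of_coprime hcop (by omega)
    set k := a' * m / d' with hk
    have hbez : a' * m = d' * k + 1 := by
      have h1 := Nat.div_add_mod (a' * m) d'
      rw [hm, ← hk] at h1
      exact h1.symm
    -- ω := u^a' / z^d' is a g0-th root of unity, hence a constant
    set ω : L := u ^ a' / z ^ d' with hω
    have hωpow : ω ^ g0 = 1 := by
      rw [hω, div_pow, ← pow_mul, ← pow_mul, mul_comm a' g0, mul_comm d' g0, ← hea, ← hed,
        hkey, div_self (pow_ne_zero _ hune)]
    have hωne : ω ≠ 0 := by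
      intro h
      rw [h, zero_pow (by omega : g0 ≠ 0)] at hωpow
      exact zero_ne_one hωpow
    haveI : IsIntegrallyClosed (MvPolynomial (Fin (n + 1)) K) :=
      UniqueFactorizationMonoid.instIsIntegrallyClosed
    obtain ⟨ω₀, hω₀⟩ : ∃ y : (MvPolynomial (Fin (n + 1)) K), algebraMap (MvPolynomial (Fin (n + 1)) K) L y = ω := by
      apply IsIntegrallyClosed.exists_algebraMap_eq_of_isIntegral_pow hg0pos
      rw [hωpow]
      exact isIntegral_one
    have hω₀pow : ω₀ ^ g0 = 1 := halg (by rw [map_pow, hω₀, hωpow, map_one])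
    obtain ⟨hω₀ne, β, hβ⟩ := isUnit_mv_iff.mp (IsUnit.of_pow_eq_one hω₀pow (by omega))
    have hβne : β ≠ 0 := fun h => hω₀ne (by rw [hβ, h, map_zero])
    -- extract the d'-th power
    have hstep : u ^ a' = ω * z ^ d' := by
      rw [hω, div_mul_cancel₀]
      exact pow_ne_zero _ hzne
    have hstep2 : u * (u ^ k) ^ d' = ω ^ m * (z ^ m) ^ d' := by
      have h := congrArg (fun x : L => x ^ m) hstep
      simp only [mul_pow, ← pow_mul] at h
      simp only [← pow_mul]
      rw [← pow_succ', mul_comm k d', ← hbez, h]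
      ring
    set w : L := u ^ k / z ^ m with hw
    have hωC : ω = algebraMap (MvPolynomial (Fin (n + 1)) K) L (MvPolynomial.C β) := by
      rw [← hω₀, hβ]
    have hwd' : w ^ d' = algebraMap (MvPolynomial (Fin (n + 1)) K) L (MvPolynomial.C (lam⁻¹ * β ^ m) * Cp) := by
      have hzm : (z ^ m) ^ d' ≠ 0 := pow_ne_zero _ (pow_ne_zero _ hzne)
      have h1 : w ^ d' * u = ω ^ m := by
        rw [hw, div_pow, div_mul_eq_mul_div, div_eq_iff hzm]
        linear_combination hstep2
      have hCeq : MvPolynomial.C (lam⁻¹ * β ^ m) * MvPolynomial.C lam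
          = (MvPolynomial.C β : MvPolynomial (Fin (n + 1)) K) ^ m := by
        rw [← map_mul, ← map_pow]
        congr 1
        field_simp
      have hR : MvPolynomial.C (lam⁻¹ * β ^ m) * Cp * MvPolynomial.C lam
          = MvPolynomial.C β ^ m * Cp := by
        linear_combination Cp * hCeq
      have hR' : algebraMap (MvPolynomial (Fin (n + 1)) K) L (MvPolynomial.C (lam⁻¹ * β ^ m) * Cp)
            * algebraMap (MvPolynomial (Fin (n + 1)) K) L (MvPolynomial.C lam)
          = algebraMap (MvPolynomial (Fin (n + 1)) K) L (MvPolynomial.C β ^ m)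
            * algebraMap (MvPolynomial (Fin (n + 1)) K) L Cp := by
        rw [← map_mul, ← map_mul]
        exact congrArg _ hR
      have h2 : algebraMap (MvPolynomial (Fin (n + 1)) K) L (MvPolynomial.C (lam⁻¹ * β ^ m) * Cp) * u
          = ω ^ m := by
        rw [hωC, hu, mul_div_assoc', div_eq_iff hclne, ← map_pow]
        exact hR'
      exact mul_right_cancel₀ hune (h1.trans h2.symm)
    obtain ⟨c, hc⟩ : ∃ y : (MvPolynomial (Fin (n + 1)) K), algebraMap (MvPolynomial (Fin (n + 1)) K) L y = w := by
      apply IsIntegrallyClosed.exists_algebraMap_eq_of_isIntegral_pow (show 0 < d' by omega)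
      rw [hwd']
      exact isIntegral_algebraMap
    have hcd' : c ^ d' = MvPolynomial.C (lam⁻¹ * β ^ m) * Cp :=
      halg (by rw [map_pow, hc, hwd'])
    have hCpeq : Cp = MvPolynomial.C (lam * (β ^ m)⁻¹) * c ^ d' := by
      rw [hcd']
      rw [← mul_assoc, ← map_mul]
      have : lam * (β ^ m)⁻¹ * (lam⁻¹ * β ^ m) = 1 := by
        field_simp
      rw [this, map_one, one_mul]
    have hcnotC : c ∉ Set.range (MvPolynomial.C : K → (MvPolynomial (Fin (n + 1)) K)) := by
      rintro ⟨γ, rfl⟩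
      exact hCpnotC (lam * (β ^ m)⁻¹ * γ ^ d') (by rw [hCpeq, ← map_pow, ← map_mul])
    exact hclosed ⟨lam * (β ^ m)⁻¹, c, d', hd'2, hcnotC, hCpeq⟩
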